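/- Let m, k ≥ 1, n = m + k, and let α_ν : ℝⁿ × ℝᵐ × ℝ → ℝ (ν = 1,…,k) be C² functions of (q₁,…,qₙ, q̇₁,…,q̇_m, t) such that ᾱ_ν := Σ_{i=1}^m q̇_i ∂α_ν/∂q̇_i equals α_ν identically for every ν = 1,…,k. Let T be a C² kinetic energy, T* its restriction obtained by substituting q̇_{m+ν} = α_ν, U a C² potential of (q₁,…,qₙ,t), L* := T* + U, and define B_i^ν as in the Voronec-type formalism. Then along every C² admissible curve q(t) (q̇_{m+ν} = α_ν along the curve) satisfying the equations of motion d/dt(∂T*/∂q̇_i) − ∂T*/∂q_i − Σ_{ν=1}^k (∂T*/∂q_{m+ν})(∂α_ν/∂q̇_i) − Σ_{ν=1}^k B_i^ν ∂T/∂q̇_{m+ν} = ∂U/∂q_i + Σ_{ν=1}^k (∂α_ν/∂q̇_i)(∂U/∂q_{m+ν}) for i = 1,…,m, one has: d/dt( Σ_{i=1}^m q̇_i ∂L*/∂q̇_i − L* ) = − ∂L*/∂t + Σ_{ν=1}^k (∂T/∂q̇_{m+ν})(∂α_ν/∂t). -/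

import Mathlib

open scoped BigOperators

noncomputable section

/-- A phase point: positions `q ∈ ℝⁿ`, independent velocities `v ∈ ℝᵐ`, and time `t`. -/
abbrev PhasePt (n m : ℕ) : Type := (Fin n → ℝ) × (Fin m → ℝ) × ℝ

/-- Partial derivative of `f : PhasePt n m → ℝ` with respect to the coordinate `q i`. -/
def pq {n m : ℕ} (f : PhasePt n m → ℝ) (i : Fin n) (p : PhasePt n m) : ℝ :=
  fderiv ℝ f p (Pi.single i 1, 0, 0)

/-- Partial derivative with respect to the independent velocity `q̇ r`. -/
def pv {n m : ℕ} (f : PhasePt n m → ℝ) (r : Fin m) (p : PhasePt n m) : ℝ :=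
  fderiv ℝ f p (0, Pi.single r 1, 0)

/-- Partial derivative with respect to time. -/
def ptime {n m : ℕ} (f : PhasePt n m → ℝ) (p : PhasePt n m) : ℝ :=
  fderiv ℝ f p (0, 0, 1)

variable {m k : ℕ}

/-- The independent velocities `q̇ 1, …, q̇ m` along a curve. -/
def ivel (q : ℝ → Fin (m + k) → ℝ) (t : ℝ) : Fin m → ℝ :=
  fun i => deriv q t (Fin.castAdd k i)

/-- The second derivatives `q̈ r` of the independent coordinates along a curve. -/
def iacc (q : ℝ → Fin (m + k) → ℝ) (t : ℝ) : Fin m → ℝ :=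
  fun i => deriv (deriv q) t (Fin.castAdd k i)

/-- The phase-space lift `(q(t), q̇ ₁(t),…,q̇ _m(t), t)` of a curve. -/
def plift (q : ℝ → Fin (m + k) → ℝ) (t : ℝ) : PhasePt (m + k) m :=
  (q t, ivel q t, t)

/-- A curve is admissible when the constraints `q̇ (m+ν) = α ν` hold along it. -/
def Admissible (α : Fin k → PhasePt (m + k) m → ℝ) (q : ℝ → Fin (m + k) → ℝ) : Prop :=
  ∀ (t : ℝ) (ν : Fin k), deriv q t (Fin.natAdd m ν) = α ν (plift q t)

/-- `ᾱ ν := ∑ i q̇ i ∂α ν/∂q̇ i`. -/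
def abar (α : Fin k → PhasePt (m + k) m → ℝ) (ν : Fin k) (p : PhasePt (m + k) m) : ℝ :=
  ∑ i : Fin m, p.2.1 i * pv (α ν) i p

/-- The Voronec coefficient `B i ν` (formula (11) of the paper), along a curve. -/
def Bcoef (α : Fin k → PhasePt (m + k) m → ℝ) (q : ℝ → Fin (m + k) → ℝ)
    (t : ℝ) (ν : Fin k) (i : Fin m) : ℝ :=
  (∑ r : Fin m, (pq (pv (α ν) i) (Fin.castAdd k r) (plift q t) * ivel q t r
      + pv (pv (α ν) i) r (plift q t) * iacc q t r))
  - pq (α ν) (Fin.castAdd k i) (plift q t)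
  + (∑ μ : Fin k, (pq (pv (α ν) i) (Fin.natAdd m μ) (plift q t) * α μ (plift q t)
      - pv (α μ) i (plift q t) * pq (α ν) (Fin.natAdd m μ) (plift q t)))
  + ptime (pv (α ν) i) (plift q t)

/-- The coefficient `B̄ ν` (formula (15) of the paper), along a curve. -/
def Bbar (α : Fin k → PhasePt (m + k) m → ℝ) (q : ℝ → Fin (m + k) → ℝ)
    (t : ℝ) (ν : Fin k) : ℝ :=
  (∑ r : Fin m, ivel q t r *
      (pq (abar α ν) (Fin.castAdd k r) (plift q t) - pq (α ν) (Fin.castAdd k r) (plift q t)))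
  + (∑ μ : Fin k, (α μ (plift q t) * pq (abar α ν) (Fin.natAdd m μ) (plift q t)
      - abar α μ (plift q t) * pq (α ν) (Fin.natAdd m μ) (plift q t)))
  + (∑ r : Fin m, iacc q t r * (pv (abar α ν) r (plift q t) - pv (α ν) r (plift q t)))
  + ptime (abar α ν) (plift q t)

/-- The full velocity vector `(q̇ ₁,…,q̇ _m, α₁,…,α_k)` obtained from a phase point. -/
def extVel (α : Fin k → PhasePt (m + k) m → ℝ) (p : PhasePt (m + k) m) : Fin (m + k) → ℝ :=
  Fin.append p.2.1 (fun ν => α ν p)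

/-- Restriction `T*` of a kinetic energy `T` by substituting `q̇ (m+ν) = α ν`. -/
def subst (α : Fin k → PhasePt (m + k) m → ℝ) (T : PhasePt (m + k) (m + k) → ℝ)
    (p : PhasePt (m + k) m) : ℝ :=
  T (p.1, extVel α p, p.2.2)

/-- `∂T/∂q̇ (m+ν)` with the dependent velocities replaced by `α₁, …, α_k`. -/
def pvT (α : Fin k → PhasePt (m + k) m → ℝ) (T : PhasePt (m + k) (m + k) → ℝ)
    (ν : Fin k) (p : PhasePt (m + k) m) : ℝ :=
  pv T (Fin.natAdd m ν) (p.1, extVel α p, p.2.2)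

/-- Partial derivative of a potential `U(q, t)` with respect to `q j`. -/
def pqU {n : ℕ} (U : (Fin n → ℝ) × ℝ → ℝ) (j : Fin n) (p : (Fin n → ℝ) × ℝ) : ℝ :=
  fderiv ℝ U p (Pi.single j 1, 0)

/-- Partial derivative of a potential `U(q, t)` with respect to time. -/
def ptU {n : ℕ} (U : (Fin n → ℝ) × ℝ → ℝ) (p : (Fin n → ℝ) × ℝ) : ℝ :=
  fderiv ℝ U p (0, 1)

/-- The Lagrangian `L* = T* + U` in terms of the independent velocities. -/
def Lag (α : Fin k → PhasePt (m + k) m → ℝ) (T : PhasePt (m + k) (m + k) → ℝ)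
    (U : (Fin (m + k) → ℝ) × ℝ → ℝ) (p : PhasePt (m + k) m) : ℝ :=
  subst α T p + U (p.1, p.2.2)

/-- The energy `∑ i q̇ i ∂L*/∂q̇ i − L*` of a function `L*` along a curve. -/
def energy (L : PhasePt (m + k) m → ℝ) (q : ℝ → Fin (m + k) → ℝ) (t : ℝ) : ℝ :=
  (∑ i : Fin m, ivel q t i * pv L i (plift q t)) - L (plift q t)


section Helpers

variable {n m' : ℕ}

lemma contDiff_dfix {f : PhasePt n m' → ℝ} (hf : ContDiff ℝ 2 f)
    (v : (Fin n → ℝ) × (Fin m' → ℝ) × ℝ) :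
    ContDiff ℝ 1 (fun p => fderiv ℝ f p v) := by
  have h := hf.fderiv_right (m := 1) (by norm_num)
  exact (ContinuousLinearMap.apply ℝ ℝ v).contDiff.comp h

/-- coordinate CLM `p ↦ p.2.1 i` -/
def coordV (n m' : ℕ) (i : Fin m') : PhasePt n m' →L[ℝ] ℝ :=
  (ContinuousLinearMap.proj i).comp
    ((ContinuousLinearMap.fst ℝ (Fin m' → ℝ) ℝ).comp
      (ContinuousLinearMap.snd ℝ (Fin n → ℝ) ((Fin m' → ℝ) × ℝ)))

@[simp] lemma coordV_apply (i : Fin m') (p : PhasePt n m') : coordV n m' i p = p.2.1 i := rfl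

/-- CLM `p ↦ (p.1, p.2.2)` -/
def projQT (n m' : ℕ) : PhasePt n m' →L[ℝ] (Fin n → ℝ) × ℝ :=
  (ContinuousLinearMap.fst ℝ (Fin n → ℝ) ((Fin m' → ℝ) × ℝ)).prod
    ((ContinuousLinearMap.snd ℝ (Fin m' → ℝ) ℝ).comp
      (ContinuousLinearMap.snd ℝ (Fin n → ℝ) ((Fin m' → ℝ) × ℝ)))

@[simp] lemma projQT_apply (p : PhasePt n m') : projQT n m' p = (p.1, p.2.2) := rfl

lemma fderiv_Ucomp {U : (Fin n → ℝ) × ℝ → ℝ} (hU : ContDiff ℝ 2 U)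
    (p : PhasePt n m') (d : (Fin n → ℝ) × (Fin m' → ℝ) × ℝ) :
    fderiv ℝ (fun p : PhasePt n m' => U (p.1, p.2.2)) p d
      = fderiv ℝ U (p.1, p.2.2) (d.1, d.2.2) := by
  have hg : HasFDerivAt (fun p : PhasePt n m' => U (p.1, p.2.2))
      ((fderiv ℝ U (p.1, p.2.2)).comp (projQT n m')) p := by
    have := ((hU.differentiable (by norm_num) (p.1, p.2.2)).hasFDerivAt).comp p
      (projQT n m').hasFDerivAt
    exact this
  rw [hg.fderiv]; rfl

/-- decomposition of a continuous linear functional over the standard directions -/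
lemma dir_decomp (Φ : PhasePt n m' →L[ℝ] ℝ) (a : Fin n → ℝ) (b : Fin m' → ℝ) (c : ℝ) :
    Φ (a, b, c) = (∑ j, a j * Φ (Pi.single j 1, 0, 0))
      + (∑ i, b i * Φ (0, Pi.single i 1, 0)) + c * Φ (0, 0, 1) := by
  have hv : (a, b, c) = (∑ j, a j • ((Pi.single j 1 : Fin n → ℝ), (0 : Fin m' → ℝ), (0:ℝ)))
      + (∑ i, b i • ((0 : Fin n → ℝ), (Pi.single i 1 : Fin m' → ℝ), (0:ℝ)))
      + c • ((0 : Fin n → ℝ), (0 : Fin m' → ℝ), (1:ℝ)) := by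
    refine Prod.ext ?_ (Prod.ext ?_ ?_) <;>
      simp [Prod.fst_sum, Prod.snd_sum, Finset.sum_apply, Pi.single_apply] <;>
      funext x <;>
      simp [Finset.sum_apply, Pi.single_apply, Finset.sum_ite_eq, Finset.sum_ite_eq']
  rw [hv]
  simp only [map_add, map_sum, map_smul, smul_eq_mul]

end Helpers
section Curve

variable {m k : ℕ}

/-- projection to independent velocities as a CLM -/
def projIV (m k : ℕ) : (Fin (m + k) → ℝ) →L[ℝ] (Fin m → ℝ) :=
  ContinuousLinearMap.pi (fun i => ContinuousLinearMap.proj (Fin.castAdd k i))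

lemma contDiff_deriv_of_two {q : ℝ → Fin (m + k) → ℝ} (hq : ContDiff ℝ 2 q) :
    ContDiff ℝ 1 (deriv q) := by
  have h2 : ContDiff ℝ ((1 : WithTop ℕ∞) + 1) q := by norm_num; exact hq
  exact (contDiff_succ_iff_deriv.mp h2).2.2

lemma hasDerivAt_ivel {q : ℝ → Fin (m + k) → ℝ} (hq : ContDiff ℝ 2 q) (t : ℝ) :
    HasDerivAt (fun s => ivel q s) (iacc q t) t := by
  have hD : HasDerivAt (deriv q) (deriv (deriv q) t) t :=
    ((contDiff_deriv_of_two hq).differentiable one_ne_zero t).hasDerivAt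
  have := (projIV m k).hasFDerivAt.comp_hasDerivAt t hD
  exact this

lemma hasDerivAt_plift {q : ℝ → Fin (m + k) → ℝ} (hq : ContDiff ℝ 2 q) (t : ℝ) :
    HasDerivAt (plift q) (deriv q t, iacc q t, 1) t := by
  have h1 : HasDerivAt q (deriv q t) t :=
    (hq.differentiable (by norm_num) t).hasDerivAt
  exact h1.prodMk ((hasDerivAt_ivel hq t).prodMk (hasDerivAt_id t))

lemma hasDerivAt_comp_plift {q : ℝ → Fin (m + k) → ℝ} (hq : ContDiff ℝ 2 q)
    {f : PhasePt (m + k) m → ℝ} (t : ℝ) (hf : DifferentiableAt ℝ f (plift q t)) :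
    HasDerivAt (fun s => f (plift q s))
      ((∑ j, deriv q t j * pq f j (plift q t))
        + (∑ i, iacc q t i * pv f i (plift q t)) + ptime f (plift q t)) t := by
  have h := hf.hasFDerivAt.comp_hasDerivAt t (hasDerivAt_plift hq t)
  have hval : fderiv ℝ f (plift q t) (deriv q t, iacc q t, 1)
      = (∑ j, deriv q t j * pq f j (plift q t))
        + (∑ i, iacc q t i * pv f i (plift q t)) + ptime f (plift q t) := by
    rw [dir_decomp]; simp [pq, pv, ptime]
  rw [hval] at h
  exact h

end Curve
section Abar

variable {m k : ℕ}

lemma fderiv_wsum {n m' : ℕ} (g : Fin m' → PhasePt n m' → ℝ) (p : PhasePt n m')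
    (hg : ∀ i, DifferentiableAt ℝ (g i) p) (d : (Fin n → ℝ) × (Fin m' → ℝ) × ℝ) :
    fderiv ℝ (fun p : PhasePt n m' => ∑ i, p.2.1 i * g i p) p d
      = ∑ i, (d.2.1 i * g i p + p.2.1 i * fderiv ℝ (g i) p d) := by
  have h : HasFDerivAt (fun p : PhasePt n m' => ∑ i, p.2.1 i * g i p)
      (∑ i, (p.2.1 i • fderiv ℝ (g i) p + g i p • (coordV n m' i))) p := by
    apply HasFDerivAt.fun_sum
    intro i _
    have := (coordV n m' i).hasFDerivAt.mul (hg i).hasFDerivAt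
    exact this
  rw [h.fderiv]
  simp only [ContinuousLinearMap.sum_apply, ContinuousLinearMap.add_apply,
    ContinuousLinearMap.smul_apply, smul_eq_mul, coordV_apply]
  exact Finset.sum_congr rfl fun i _ => by ring

lemma diffAt_pv {α : Fin k → PhasePt (m + k) m → ℝ} (hα : ∀ ν, ContDiff ℝ 2 (α ν))
    (ν : Fin k) (i : Fin m) (p : PhasePt (m + k) m) :
    DifferentiableAt ℝ (pv (α ν) i) p :=
  ((contDiff_dfix (hα ν) (0, Pi.single i 1, 0)).differentiable one_ne_zero p)

lemma fderiv_abar {α : Fin k → PhasePt (m + k) m → ℝ} (hα : ∀ ν, ContDiff ℝ 2 (α ν))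
    (ν : Fin k) (p : PhasePt (m + k) m) (d : (Fin (m + k) → ℝ) × (Fin m → ℝ) × ℝ) :
    fderiv ℝ (abar α ν) p d
      = ∑ i, (d.2.1 i * pv (α ν) i p + p.2.1 i * fderiv ℝ (pv (α ν) i) p d) := by
  exact fderiv_wsum (fun i => pv (α ν) i) p (fun i => diffAt_pv hα ν i p) d

lemma pq_abar {α : Fin k → PhasePt (m + k) m → ℝ} (hα : ∀ ν, ContDiff ℝ 2 (α ν))
    (ν : Fin k) (j : Fin (m + k)) (p : PhasePt (m + k) m) :
    pq (abar α ν) j p = ∑ i, p.2.1 i * pq (pv (α ν) i) j p := by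
  have := fderiv_abar hα ν p (Pi.single j 1, 0, 0)
  simpa [pq] using this

lemma pv_abar {α : Fin k → PhasePt (m + k) m → ℝ} (hα : ∀ ν, ContDiff ℝ 2 (α ν))
    (ν : Fin k) (r : Fin m) (p : PhasePt (m + k) m) :
    pv (abar α ν) r p = pv (α ν) r p + ∑ i, p.2.1 i * pv (pv (α ν) i) r p := by
  have := fderiv_abar hα ν p (0, Pi.single r 1, 0)
  rw [pv, this, Finset.sum_add_distrib]
  congr 1
  simp [Pi.single_apply, ite_mul]

lemma ptime_abar {α : Fin k → PhasePt (m + k) m → ℝ} (hα : ∀ ν, ContDiff ℝ 2 (α ν))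
    (ν : Fin k) (p : PhasePt (m + k) m) :
    ptime (abar α ν) p = ∑ i, p.2.1 i * ptime (pv (α ν) i) p := by
  have := fderiv_abar hα ν p (0, 0, 1)
  simpa [ptime] using this

end Abar
section KeyB

variable {m k : ℕ}

lemma sum_vB {α : Fin k → PhasePt (m + k) m → ℝ} (hα : ∀ ν, ContDiff ℝ 2 (α ν))
    (habar : ∀ (ν : Fin k) (p : PhasePt (m + k) m), abar α ν p = α ν p)
    (q : ℝ → Fin (m + k) → ℝ) (t : ℝ) (ν : Fin k) :
    ∑ i, ivel q t i * Bcoef α q t ν i = ptime (α ν) (plift q t) := by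
  set p := plift q t with hp
  have hfun : abar α ν = α ν := funext (habar ν)
  have hA : ∀ j, (∑ i, ivel q t i * pq (pv (α ν) i) j p) = pq (α ν) j p := by
    intro j
    have h := pq_abar hα ν j p
    rw [hfun] at h
    exact h.symm
  have hB : ∀ r, (∑ i, ivel q t i * pv (pv (α ν) i) r p) = 0 := by
    intro r
    have h := pv_abar hα ν r p
    rw [hfun] at h
    have : (∑ i, p.2.1 i * pv (pv (α ν) i) r p) = 0 := by linarith
    exact this
  have hC : ∀ μ, (∑ i, ivel q t i * pv (α μ) i p) = α μ p := fun μ => habar μ p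
  have hD : (∑ i, ivel q t i * ptime (pv (α ν) i) p) = ptime (α ν) p := by
    have h := ptime_abar hα ν p
    rw [hfun] at h
    exact h.symm
  have e1 : (∑ i, ivel q t i * ∑ r, (pq (pv (α ν) i) (Fin.castAdd k r) p * ivel q t r
        + pv (pv (α ν) i) r p * iacc q t r))
      = ∑ i, ivel q t i * pq (α ν) (Fin.castAdd k i) p := by
    calc (∑ i, ivel q t i * ∑ r, (pq (pv (α ν) i) (Fin.castAdd k r) p * ivel q t r
            + pv (pv (α ν) i) r p * iacc q t r))
        = ∑ r, ((∑ i, ivel q t i * pq (pv (α ν) i) (Fin.castAdd k r) p) * ivel q t r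
            + (∑ i, ivel q t i * pv (pv (α ν) i) r p) * iacc q t r) := by
          simp only [Finset.mul_sum, mul_add]
          rw [Finset.sum_comm]
          refine Finset.sum_congr rfl fun r _ => ?_
          rw [Finset.sum_add_distrib, Finset.sum_mul, Finset.sum_mul]
          congr 1
          · exact Finset.sum_congr rfl fun i _ => by ring
          · exact Finset.sum_congr rfl fun i _ => by ring
      _ = ∑ r, pq (α ν) (Fin.castAdd k r) p * ivel q t r := by
          refine Finset.sum_congr rfl fun r _ => ?_
          rw [hA, hB]; ring
      _ = ∑ i, ivel q t i * pq (α ν) (Fin.castAdd k i) p :=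
          Finset.sum_congr rfl fun i _ => mul_comm _ _
  have e2 : (∑ i, ivel q t i * ∑ μ, (pq (pv (α ν) i) (Fin.natAdd m μ) p * α μ p
        - pv (α μ) i p * pq (α ν) (Fin.natAdd m μ) p)) = 0 := by
    calc (∑ i, ivel q t i * ∑ μ, (pq (pv (α ν) i) (Fin.natAdd m μ) p * α μ p
            - pv (α μ) i p * pq (α ν) (Fin.natAdd m μ) p))
        = ∑ μ, ((∑ i, ivel q t i * pq (pv (α ν) i) (Fin.natAdd m μ) p) * α μ p
            - (∑ i, ivel q t i * pv (α μ) i p) * pq (α ν) (Fin.natAdd m μ) p) := by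
          simp only [Finset.mul_sum, mul_sub]
          rw [Finset.sum_comm]
          refine Finset.sum_congr rfl fun μ _ => ?_
          rw [Finset.sum_sub_distrib, Finset.sum_mul, Finset.sum_mul]
          congr 1
          · exact Finset.sum_congr rfl fun i _ => by ring
          · exact Finset.sum_congr rfl fun i _ => by ring
      _ = 0 := by
          rw [Finset.sum_eq_zero]
          intro μ _
          rw [hA, hC]; ring
  calc ∑ i, ivel q t i * Bcoef α q t ν i
      = (∑ i, ivel q t i * ∑ r, (pq (pv (α ν) i) (Fin.castAdd k r) p * ivel q t r
            + pv (pv (α ν) i) r p * iacc q t r))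
        - (∑ i, ivel q t i * pq (α ν) (Fin.castAdd k i) p)
        + (∑ i, ivel q t i * ∑ μ, (pq (pv (α ν) i) (Fin.natAdd m μ) p * α μ p
            - pv (α μ) i p * pq (α ν) (Fin.natAdd m μ) p))
        + (∑ i, ivel q t i * ptime (pv (α ν) i) p) := by
        simp only [Bcoef, ← hp, mul_sub, mul_add, Finset.sum_add_distrib,
          Finset.sum_sub_distrib]
    _ = ptime (α ν) p := by rw [e1, e2, hD]; ring

end KeyB
section LagLemmas

variable {m k : ℕ}

lemma contDiff_extVel {α : Fin k → PhasePt (m + k) m → ℝ} (hα : ∀ ν, ContDiff ℝ 2 (α ν)) :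
    ContDiff ℝ 2 (extVel α) := by
  rw [contDiff_pi]
  intro j
  refine Fin.addCases (motive := fun j => ContDiff ℝ 2 fun p : PhasePt (m + k) m => extVel α p j)
    (fun i => ?_) (fun ν => ?_) j
  · have h : (fun p : PhasePt (m + k) m => extVel α p (Fin.castAdd k i))
        = fun p => p.2.1 i := by
      funext p; simp [extVel, Fin.append_left]
    show ContDiff ℝ 2 fun p : PhasePt (m + k) m => extVel α p (Fin.castAdd k i)
    rw [h]
    exact (coordV (m + k) m i).contDiff
  · have h : (fun p : PhasePt (m + k) m => extVel α p (Fin.natAdd m ν))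
        = fun p => α ν p := by
      funext p; simp [extVel, Fin.append_right]
    show ContDiff ℝ 2 fun p : PhasePt (m + k) m => extVel α p (Fin.natAdd m ν)
    rw [h]
    exact hα ν

lemma contDiff_subst {α : Fin k → PhasePt (m + k) m → ℝ} (hα : ∀ ν, ContDiff ℝ 2 (α ν))
    {T : PhasePt (m + k) (m + k) → ℝ} (hT : ContDiff ℝ 2 T) :
    ContDiff ℝ 2 (subst α T) := by
  have hΨ : ContDiff ℝ 2 (fun p : PhasePt (m + k) m => ((p.1, extVel α p, p.2.2) : PhasePt (m + k) (m + k))) :=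
    contDiff_fst.prodMk ((contDiff_extVel hα).prodMk (contDiff_snd.comp contDiff_snd))
  exact hT.comp hΨ

lemma fderiv_Lag {α : Fin k → PhasePt (m + k) m → ℝ} {T : PhasePt (m + k) (m + k) → ℝ}
    {U : (Fin (m + k) → ℝ) × ℝ → ℝ} (hsub2 : ContDiff ℝ 2 (subst α T)) (hU : ContDiff ℝ 2 U)
    (p : PhasePt (m + k) m) (d : (Fin (m + k) → ℝ) × (Fin m → ℝ) × ℝ) :
    fderiv ℝ (Lag α T U) p d
      = fderiv ℝ (subst α T) p d + fderiv ℝ U (p.1, p.2.2) (d.1, d.2.2) := by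
  have hs : HasFDerivAt (subst α T) (fderiv ℝ (subst α T) p) p :=
    (hsub2.differentiable (by norm_num) p).hasFDerivAt
  have hu : HasFDerivAt (fun p : PhasePt (m + k) m => U (p.1, p.2.2))
      ((fderiv ℝ U (p.1, p.2.2)).comp (projQT (m + k) m)) p := by
    have := ((hU.differentiable (by norm_num) (p.1, p.2.2)).hasFDerivAt).comp p
      (projQT (m + k) m).hasFDerivAt
    exact this
  have h : HasFDerivAt (Lag α T U)
      (fderiv ℝ (subst α T) p + (fderiv ℝ U (p.1, p.2.2)).comp (projQT (m + k) m)) p :=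
    hs.add hu
  rw [h.fderiv]
  rfl

lemma pv_Lag {α : Fin k → PhasePt (m + k) m → ℝ} {T : PhasePt (m + k) (m + k) → ℝ}
    {U : (Fin (m + k) → ℝ) × ℝ → ℝ} (hsub2 : ContDiff ℝ 2 (subst α T)) (hU : ContDiff ℝ 2 U)
    (i : Fin m) (p : PhasePt (m + k) m) :
    pv (Lag α T U) i p = pv (subst α T) i p := by
  have h := fderiv_Lag hsub2 hU p (0, Pi.single i 1, 0)
  have h0 : ((0 : Fin (m + k) → ℝ), (0 : ℝ)) = (0 : (Fin (m + k) → ℝ) × ℝ) := rfl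
  rw [pv, pv, h]
  simp [h0]

lemma pq_Lag {α : Fin k → PhasePt (m + k) m → ℝ} {T : PhasePt (m + k) (m + k) → ℝ}
    {U : (Fin (m + k) → ℝ) × ℝ → ℝ} (hsub2 : ContDiff ℝ 2 (subst α T)) (hU : ContDiff ℝ 2 U)
    (j : Fin (m + k)) (p : PhasePt (m + k) m) :
    pq (Lag α T U) j p = pq (subst α T) j p + pqU U j (p.1, p.2.2) := by
  have h := fderiv_Lag hsub2 hU p (Pi.single j 1, 0, 0)
  rw [pq, pq, pqU, h]

end LagLemmas
section Swap

lemma swapL {ι κ : Type*} [Fintype ι] [Fintype κ] (v : ι → ℝ) (f : ι → κ → ℝ) (c : κ → ℝ) :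
    (∑ i, v i * ∑ ν, c ν * f i ν) = ∑ ν, c ν * (∑ i, v i * f i ν) := by
  simp only [Finset.mul_sum]
  rw [Finset.sum_comm]
  exact Finset.sum_congr rfl fun ν _ => Finset.sum_congr rfl fun i _ => by ring

lemma swapR {ι κ : Type*} [Fintype ι] [Fintype κ] (v : ι → ℝ) (f : ι → κ → ℝ) (c : κ → ℝ) :
    (∑ i, v i * ∑ ν, f i ν * c ν) = ∑ ν, (∑ i, v i * f i ν) * c ν := by
  simp only [Finset.mul_sum, Finset.sum_mul]
  rw [Finset.sum_comm]
  exact Finset.sum_congr rfl fun ν _ => Finset.sum_congr rfl fun i _ => by ring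

end Swap

/-- Proposition 3 of the paper: simplified energy balance (25).
If `ᾱ ν = α ν` identically for every `ν` (i.e. the constraints are positively
homogeneous of degree 1 in the independent velocities), then along every admissible
`C²` solution of the Voronec-type equations of motion,
`d/dt(∑ i q̇ i ∂L*/∂q̇ i − L*) = − ∂L*/∂t + ∑ ν (∂T/∂q̇ (m+ν))(∂α ν/∂t)`. -/
theorem energy_balance_homogeneous
    (m k : ℕ) (hm : 1 ≤ m) (hk : 1 ≤ k)
    (α : Fin k → PhasePt (m + k) m → ℝ) (hα : ∀ ν, ContDiff ℝ 2 (α ν))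
    (habar : ∀ (ν : Fin k) (p : PhasePt (m + k) m), abar α ν p = α ν p)
    (T : PhasePt (m + k) (m + k) → ℝ) (hT : ContDiff ℝ 2 T)
    (U : (Fin (m + k) → ℝ) × ℝ → ℝ) (hU : ContDiff ℝ 2 U)
    (q : ℝ → Fin (m + k) → ℝ) (hq : ContDiff ℝ 2 q)
    (hadm : Admissible α q)
    (heom : ∀ (t : ℝ) (i : Fin m),
      deriv (fun s => pv (subst α T) i (plift q s)) t
        - pq (subst α T) (Fin.castAdd k i) (plift q t)
        - (∑ ν : Fin k, pq (subst α T) (Fin.natAdd m ν) (plift q t) * pv (α ν) i (plift q t))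
        - (∑ ν : Fin k, Bcoef α q t ν i * pvT α T ν (plift q t)) =
      pqU U (Fin.castAdd k i) (q t, t)
        + ∑ ν : Fin k, pv (α ν) i (plift q t) * pqU U (Fin.natAdd m ν) (q t, t)) :
    ∀ t : ℝ,
      deriv (fun s => energy (Lag α T U) q s) t =
        - ptime (Lag α T U) (plift q t)
          + ∑ ν : Fin k, pvT α T ν (plift q t) * ptime (α ν) (plift q t) := by
  intro t
  have hsub2 : ContDiff ℝ 2 (subst α T) := contDiff_subst hα hT
  have hLag2 : ContDiff ℝ 2 (Lag α T U) := by
    have hu : ContDiff ℝ 2 (fun p : PhasePt (m + k) m => U (p.1, p.2.2)) :=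
      hU.comp (projQT (m + k) m).contDiff
    exact hsub2.add hu
  -- Step 1: replace pv (Lag) by pv (subst) inside the energy
  have hE : (fun s => energy (Lag α T U) q s)
      = fun s => (∑ i, ivel q s i * pv (subst α T) i (plift q s)) - Lag α T U (plift q s) := by
    funext s
    unfold energy
    congr 1
    exact Finset.sum_congr rfl fun i _ => by rw [pv_Lag hsub2 hU]
  rw [hE]
  -- Step 2: compute the derivative
  have hLd : HasDerivAt (fun s => Lag α T U (plift q s))
      ((∑ j, deriv q t j * pq (Lag α T U) j (plift q t))
        + (∑ i, iacc q t i * pv (Lag α T U) i (plift q t)) + ptime (Lag α T U) (plift q t)) t :=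
    hasDerivAt_comp_plift hq t ((hLag2.differentiable (by norm_num)) (plift q t))
  have hPd : ∀ i : Fin m, HasDerivAt (fun s => pv (subst α T) i (plift q s))
      (deriv (fun s => pv (subst α T) i (plift q s)) t) t := by
    intro i
    have h1 : DifferentiableAt ℝ (pv (subst α T) i) (plift q t) :=
      (contDiff_dfix hsub2 (0, Pi.single i 1, 0)).differentiable one_ne_zero _
    have h2 : DifferentiableAt ℝ (fun s => pv (subst α T) i (plift q s)) t :=
      h1.comp t (hasDerivAt_plift hq t).differentiableAt
    exact h2.hasDerivAt
  have hveli : ∀ i : Fin m, HasDerivAt (fun s => ivel q s i) (iacc q t i) t := by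
    intro i
    exact (ContinuousLinearMap.proj (R := ℝ) (φ := fun _ : Fin m => ℝ)
      i).hasFDerivAt.comp_hasDerivAt t (hasDerivAt_ivel hq t)
  have hsum : HasDerivAt (fun s => ∑ i, ivel q s i * pv (subst α T) i (plift q s))
      (∑ i, (iacc q t i * pv (subst α T) i (plift q t)
        + ivel q t i * deriv (fun s => pv (subst α T) i (plift q s)) t)) t :=
    HasDerivAt.fun_sum fun i _ => (hveli i).mul (hPd i)
  have hEd : HasDerivAt
      (fun s => (∑ i, ivel q s i * pv (subst α T) i (plift q s)) - Lag α T U (plift q s))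
      ((∑ i, (iacc q t i * pv (subst α T) i (plift q t)
          + ivel q t i * deriv (fun s => pv (subst α T) i (plift q s)) t))
        - ((∑ j, deriv q t j * pq (Lag α T U) j (plift q t))
          + (∑ i, iacc q t i * pv (Lag α T U) i (plift q t))
          + ptime (Lag α T U) (plift q t))) t := hsum.sub hLd
  rw [hEd.deriv]
  -- Step 3: algebra
  have hpq : ∀ j, pq (Lag α T U) j (plift q t)
      = pq (subst α T) j (plift q t) + pqU U j (q t, t) :=
    fun j => pq_Lag hsub2 hU j (plift q t)
  have hCν : ∀ ν, (∑ i, ivel q t i * pv (α ν) i (plift q t)) = α ν (plift q t) :=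
    fun ν => habar ν (plift q t)
  have hBν : ∀ ν, (∑ i, ivel q t i * Bcoef α q t ν i) = ptime (α ν) (plift q t) :=
    sum_vB hα habar q t
  have hsplit : (∑ j, deriv q t j * pq (Lag α T U) j (plift q t))
      = ((∑ i, ivel q t i * pq (subst α T) (Fin.castAdd k i) (plift q t))
          + (∑ i, ivel q t i * pqU U (Fin.castAdd k i) (q t, t)))
        + ((∑ ν, pq (subst α T) (Fin.natAdd m ν) (plift q t) * α ν (plift q t))
          + (∑ ν, α ν (plift q t) * pqU U (Fin.natAdd m ν) (q t, t))) := by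
    rw [Fin.sum_univ_add]
    congr 1
    · rw [← Finset.sum_add_distrib]
      refine Finset.sum_congr rfl fun i _ => ?_
      have hd : deriv q t (Fin.castAdd k i) = ivel q t i := rfl
      rw [hpq, hd]
      ring
    · rw [← Finset.sum_add_distrib]
      refine Finset.sum_congr rfl fun ν _ => ?_
      rw [hadm t ν, hpq]
      ring
  have hvL : (∑ i, iacc q t i * pv (Lag α T U) i (plift q t))
      = ∑ i, iacc q t i * pv (subst α T) i (plift q t) :=
    Finset.sum_congr rfl fun i _ => by rw [pv_Lag hsub2 hU]
  have hD : ∀ i : Fin m, deriv (fun s => pv (subst α T) i (plift q s)) t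
      = ivel q t i * 0 + (pq (subst α T) (Fin.castAdd k i) (plift q t)
        + (∑ ν, pq (subst α T) (Fin.natAdd m ν) (plift q t) * pv (α ν) i (plift q t))
        + (∑ ν, Bcoef α q t ν i * pvT α T ν (plift q t))
        + pqU U (Fin.castAdd k i) (q t, t)
        + (∑ ν, pv (α ν) i (plift q t) * pqU U (Fin.natAdd m ν) (q t, t))) := by
    intro i
    have h := heom t i
    linarith
  have hDsum : (∑ i, ivel q t i * deriv (fun s => pv (subst α T) i (plift q s)) t)
      = (∑ i, ivel q t i * pq (subst α T) (Fin.castAdd k i) (plift q t))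
        + (∑ ν, pq (subst α T) (Fin.natAdd m ν) (plift q t) * α ν (plift q t))
        + (∑ ν, pvT α T ν (plift q t) * ptime (α ν) (plift q t))
        + (∑ i, ivel q t i * pqU U (Fin.castAdd k i) (q t, t))
        + (∑ ν, α ν (plift q t) * pqU U (Fin.natAdd m ν) (q t, t)) := by
    have e1 : (∑ i, ivel q t i * deriv (fun s => pv (subst α T) i (plift q s)) t)
        = (∑ i, ivel q t i * pq (subst α T) (Fin.castAdd k i) (plift q t))
          + (∑ i, ivel q t i * ∑ ν, pq (subst α T) (Fin.natAdd m ν) (plift q t)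
              * pv (α ν) i (plift q t))
          + (∑ i, ivel q t i * ∑ ν, Bcoef α q t ν i * pvT α T ν (plift q t))
          + (∑ i, ivel q t i * pqU U (Fin.castAdd k i) (q t, t))
          + (∑ i, ivel q t i * ∑ ν, pv (α ν) i (plift q t)
              * pqU U (Fin.natAdd m ν) (q t, t)) := by
      rw [← Finset.sum_add_distrib, ← Finset.sum_add_distrib, ← Finset.sum_add_distrib,
        ← Finset.sum_add_distrib]
      refine Finset.sum_congr rfl fun i _ => ?_
      rw [hD i]
      ring
    have s2 : (∑ i, ivel q t i * ∑ ν, pq (subst α T) (Fin.natAdd m ν) (plift q t)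
          * pv (α ν) i (plift q t))
        = ∑ ν, pq (subst α T) (Fin.natAdd m ν) (plift q t) * α ν (plift q t) := by
      rw [swapL]
      exact Finset.sum_congr rfl fun ν _ => by rw [hCν]
    have s3 : (∑ i, ivel q t i * ∑ ν, Bcoef α q t ν i * pvT α T ν (plift q t))
        = ∑ ν, pvT α T ν (plift q t) * ptime (α ν) (plift q t) := by
      rw [swapR]
      exact Finset.sum_congr rfl fun ν _ => by rw [hBν ν]; ring
    have s5 : (∑ i, ivel q t i * ∑ ν, pv (α ν) i (plift q t)
          * pqU U (Fin.natAdd m ν) (q t, t))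
        = ∑ ν, α ν (plift q t) * pqU U (Fin.natAdd m ν) (q t, t) := by
      rw [swapR]
      exact Finset.sum_congr rfl fun ν _ => by rw [hCν]
    rw [e1, s2, s3, s5]
  rw [Finset.sum_add_distrib, hsplit, hvL, hDsum]
  ring


end
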